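/- Take ρ = 1 and define the 2×2 matrices over A: L₀ = [[(1/2)·1 + K, −S], [N, (1/2)·1 − K']], L₀ᵗ = [[(1/2)·1 − K, S], [−N, (1/2)·1 + K']], CFK₀ = [[−2K, 2S], [−2N, 2K']], CFK₀ᵗ = [[2K, −2S], [2N, −2K']], R₀ = (1/2)·[[1, 2S], [−2N, 1]], R₀ᵗ = (1/2)·[[1, −2S], [2N, 1]], GFK₀ = L₀ + R₀·CFK₀ and GFK₀ᵗ = L₀ᵗ + CFK₀ᵗ·R₀ᵗ. Then GFK₀ᵗ · GFK₀ = diag(1 − 3K², 1 − 3K'²). -/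
import Mathlib


theorem GFK0t_mul_GFK0_rho_one (A : Type*) [Ring A] [Algebra ℝ A]
    (S N K K' : A)
    (hSN : S * N = -(1/4 : ℝ) • (1 : A) + K ^ 2)
    (hNS : N * S = -(1/4 : ℝ) • (1 : A) + K' ^ 2)
    (hNK : N * K = K' * N)
    (hKS : K * S = S * K')
    (L₀ L₀t CFK₀ CFK₀t R₀ R₀t GFK₀ GFK₀t : Matrix (Fin 2) (Fin 2) A)
    (hL₀ : L₀ = !![(1/2 : ℝ) • (1 : A) + K, -S; N, (1/2 : ℝ) • (1 : A) - K'])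
    (hL₀t : L₀t = !![(1/2 : ℝ) • (1 : A) - K, S; -N, (1/2 : ℝ) • (1 : A) + K'])
    (hCFK₀ : CFK₀ = !![-(2 : ℝ) • K, (2 : ℝ) • S; -(2 : ℝ) • N, (2 : ℝ) • K'])
    (hCFK₀t : CFK₀t = !![(2 : ℝ) • K, -(2 : ℝ) • S; (2 : ℝ) • N, -(2 : ℝ) • K'])
    (hR₀ : R₀ = (1/2 : ℝ) • !![(1 : A), (2 : ℝ) • S; -(2 : ℝ) • N, (1 : A)])
    (hR₀t : R₀t = (1/2 : ℝ) • !![(1 : A), -(2 : ℝ) • S; (2 : ℝ) • N, (1 : A)])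
    (hGFK₀ : GFK₀ = L₀ + R₀ * CFK₀)
    (hGFK₀t : GFK₀t = L₀t + CFK₀t * R₀t) :
    GFK₀t * GFK₀ =
      !![(1 : A) - (3 : ℝ) • K ^ 2, 0; 0, (1 : A) - (3 : ℝ) • K' ^ 2] := by
  have hSN' : ∀ x : A, S * (N * x) = -(1/4 : ℝ) • x + K * (K * x) := by
    intro x
    rw [← mul_assoc, hSN]; rw [pow_two]
    simp [add_mul, mul_assoc, smul_mul_assoc]
  have hNS' : ∀ x : A, N * (S * x) = -(1/4 : ℝ) • x + K' * (K' * x) := by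
    intro x
    rw [← mul_assoc, hNS]; rw [pow_two]
    simp [add_mul, mul_assoc, smul_mul_assoc]
  have hNK2 : K' * N = N * K := hNK.symm
  have hNK2' : ∀ x : A, K' * (N * x) = N * (K * x) := by
    intro x; rw [← mul_assoc, ← hNK, mul_assoc]
  have hKS' : ∀ x : A, K * (S * x) = S * (K' * x) := by
    intro x; rw [← mul_assoc, hKS, mul_assoc]
  subst hGFK₀ hGFK₀t hL₀ hL₀t hCFK₀ hCFK₀t hR₀ hR₀t
  ext i j
  fin_cases i <;> fin_cases j <;>
    · simp only [Matrix.add_mul, Matrix.mul_add, Matrix.mul_apply, Fin.sum_univ_two,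
        Matrix.add_apply, Matrix.smul_apply, Matrix.cons_val', Matrix.cons_val_zero,
        Matrix.cons_val_one, Matrix.head_cons, Matrix.head_fin_const, Matrix.empty_val',
        Matrix.cons_val_fin_one, Fin.mk_zero, Fin.mk_one, Matrix.of_apply, Matrix.cons_val_zero, Matrix.cons_val_one]
      simp only [pow_two, mul_add, add_mul, mul_sub, sub_mul, smul_mul_assoc,
        mul_smul_comm, mul_assoc, mul_one, one_mul, smul_add, smul_sub, smul_smul,
        mul_neg, neg_mul, smul_neg, neg_smul, hSN, hNS, hNK2, hKS, hSN', hNS', hNK2', hKS']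
      module
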